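/- Let (X,ρ_X) and (Y,ρ_Y) be nonempty compact metric spaces, with associated compact quantum metric spaces (Lip(X),L_{ρ_X}) and (Lip(Y),L_{ρ_Y}). If dist_q((Lip(X),L_{ρ_X}), (Lip(Y),L_{ρ_Y})) = 0, then dist_GH(X,Y) = 0; that is, X and Y are isometric. -/

import Mathlib

open scoped ENNReal NNReal

/-- An order-unit space in the sense of Kadison: a partially ordered real vector
space with a positive order unit `e` satisfying the order-unit property and the
Archimedean property. -/
structure OrderUnitSpace : Type 1 where
  carrier : Type
  [toAddCommGroup : AddCommGroup carrier]
  [toModule : Module ℝ carrier]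
  [toPartialOrder : PartialOrder carrier]
  add_le_add_left' : ∀ a b : carrier, a ≤ b → ∀ c : carrier, c + a ≤ c + b
  smul_nonneg' : ∀ (r : ℝ) (a : carrier), 0 ≤ r → 0 ≤ a → 0 ≤ r • a
  e : carrier
  e_nonneg : 0 ≤ e
  orderUnit : ∀ a : carrier, ∃ r : ℝ, a ≤ r • e
  arch : ∀ a : carrier, (∀ r : ℝ, 0 < r → a ≤ r • e) → a ≤ 0

attribute [instance] OrderUnitSpace.toAddCommGroup OrderUnitSpace.toModule
  OrderUnitSpace.toPartialOrder

/-- The topology generated by the open balls of a distance function. -/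
def ballTopology {S : Type*} (ρ : S → S → ℝ≥0∞) : TopologicalSpace S :=
  TopologicalSpace.generateFrom
    {U : Set S | ∃ (μ : S) (ε : ℝ≥0∞), 0 < ε ∧ U = {ν | ρ μ ν < ε}}

/-- The quotient seminorm of `L` along the surjection `π`. -/
noncomputable def quotientSeminorm {α β : Type*} (π : α → β) (L : α → ℝ) (b : β) : ℝ :=
  sInf {r : ℝ | ∃ a, π a = b ∧ L a = r}

/-- `L` induces `LB` via `π`, i.e. `LB` is the quotient seminorm of `L` for `π`. -/
def Induces {α β : Type*} (π : α → β) (L : α → ℝ) (LB : β → ℝ) : Prop :=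
  ∀ b, LB b = quotientSeminorm π L b

/-- Hausdorff distance between two subsets with respect to a distance function. -/
noncomputable def hausdorffDistWith {S : Type*} (ρ : S → S → ℝ≥0∞) (T U : Set S) : ℝ≥0∞ :=
  max (⨆ t ∈ T, ⨅ u ∈ U, ρ t u) (⨆ u ∈ U, ⨅ t ∈ T, ρ t u)

namespace OrderUnitSpace

variable (A B : OrderUnitSpace)

theorem le_of_sub_nonneg'' {x y : A.carrier} (h : 0 ≤ y - x) : x ≤ y := by
  have h2 := A.add_le_add_left' 0 (y - x) h x
  have h3 : x + (y - x) = y := by abel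
  rw [add_zero, h3] at h2
  exact h2

theorem smul_e_mono {r s : ℝ} (h : r ≤ s) : r • A.e ≤ s • A.e := by
  apply A.le_of_sub_nonneg''
  have h3 : s • A.e - r • A.e = (s - r) • A.e := by rw [sub_smul]
  rw [h3]
  exact A.smul_nonneg' _ _ (by linarith) A.e_nonneg

/-- The order-unit norm. -/
noncomputable def onorm (a : A.carrier) : ℝ :=
  sInf {r : ℝ | -(r • A.e) ≤ a ∧ a ≤ r • A.e}

/-- A state: a unital positive linear functional. -/
def IsState (μ : A.carrier →ₗ[ℝ] ℝ) : Prop :=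
  μ A.e = 1 ∧ ∀ a : A.carrier, 0 ≤ a → 0 ≤ μ a

/-- The state space. -/
def State : Type := {μ : A.carrier →ₗ[ℝ] ℝ // A.IsState μ}

/-- The weak-* topology on the state space. -/
instance : TopologicalSpace A.State :=
  TopologicalSpace.induced (fun μ : A.State => (μ.1 : A.carrier → ℝ)) Pi.topologicalSpace

/-- The metric `ρ_L` on the state space defined by a seminorm `L`. -/
noncomputable def rho (L : Seminorm ℝ A.carrier) (μ ν : A.State) : ℝ≥0∞ :=
  ⨆ a : {a : A.carrier // L a ≤ 1}, ENNReal.ofReal |μ.1 a.1 - ν.1 a.1|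

/-- A Lipschitz seminorm: its null space is exactly `ℝ e`. -/
def IsLipschitz (L : Seminorm ℝ A.carrier) : Prop :=
  ∀ a : A.carrier, L a = 0 ↔ ∃ t : ℝ, a = t • A.e

/-- A Lip-norm: a Lipschitz seminorm whose metric `ρ_L` induces the weak-* topology. -/
def IsLipNorm (L : Seminorm ℝ A.carrier) : Prop :=
  A.IsLipschitz L ∧ ballTopology (A.rho L) = (inferInstance : TopologicalSpace A.State)

/-- The diameter of the state space for `ρ_L`. -/
noncomputable def diam (L : Seminorm ℝ A.carrier) : ℝ≥0∞ :=
  ⨆ (μ : A.State) (ν : A.State), A.rho L μ ν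

/-- The radius: half the diameter. -/
noncomputable def radius (L : Seminorm ℝ A.carrier) : ℝ≥0∞ := A.diam L / 2

/-- Morphism of order-unit spaces: a unital positive linear map. -/
def IsMorphism (f : A.carrier →ₗ[ℝ] B.carrier) : Prop :=
  f A.e = B.e ∧ ∀ a : A.carrier, 0 ≤ a → 0 ≤ f a

/-- Pull back a state along a morphism; this is `S(π)`. -/
noncomputable def pullState (f : A.carrier →ₗ[ℝ] B.carrier) (hf : A.IsMorphism B f)
    (μ : B.State) : A.State :=
  ⟨(μ.1).comp f, by
    constructor
    · rw [LinearMap.comp_apply, hf.1]; exact μ.2.1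
    · intro a ha; exact μ.2.2 _ (hf.2 a ha)⟩

/-- The direct sum `A ⊕ B` as an order-unit space. -/
@[reducible] def prod : OrderUnitSpace where
  carrier := A.carrier × B.carrier
  add_le_add_left' := by
    intro a b hab c
    rw [Prod.le_def] at hab ⊢
    exact ⟨A.add_le_add_left' _ _ hab.1 _, B.add_le_add_left' _ _ hab.2 _⟩
  smul_nonneg' := by
    intro r a hr ha
    rw [Prod.le_def] at ha ⊢
    exact ⟨A.smul_nonneg' r a.1 hr ha.1, B.smul_nonneg' r a.2 hr ha.2⟩
  e := (A.e, B.e)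
  e_nonneg := by
    rw [Prod.le_def]
    exact ⟨A.e_nonneg, B.e_nonneg⟩
  orderUnit := by
    intro a
    obtain ⟨r₁, h1⟩ := A.orderUnit a.1
    obtain ⟨r₂, h2⟩ := B.orderUnit a.2
    refine ⟨max r₁ r₂, ?_⟩
    rw [Prod.le_def]
    exact ⟨le_trans h1 (A.smul_e_mono (le_max_left _ _)),
      le_trans h2 (B.smul_e_mono (le_max_right _ _))⟩
  arch := by
    intro a h
    rw [Prod.le_def]
    exact ⟨A.arch a.1 fun r hr => ((Prod.le_def.mp (h r hr)).1),
      B.arch a.2 fun r hr => ((Prod.le_def.mp (h r hr)).2)⟩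

/-- The embedding of `S(A)` into `S(A ⊕ B)` dual to the first coordinate projection. -/
noncomputable def leftState (μ : A.State) : (A.prod B).State :=
  ⟨(μ.1).comp (LinearMap.fst ℝ A.carrier B.carrier), by
    constructor
    · exact μ.2.1
    · intro p hp; exact μ.2.2 p.1 hp.1⟩

/-- The embedding of `S(B)` into `S(A ⊕ B)` dual to the second coordinate projection. -/
noncomputable def rightState (ν : B.State) : (A.prod B).State :=
  ⟨(ν.1).comp (LinearMap.snd ℝ A.carrier B.carrier), by
    constructor
    · exact ν.2.1
    · intro p hp; exact ν.2.2 p.2 hp.2⟩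

/-- The set `M(L_A, L_B)` of Lip-norms on `A ⊕ B` inducing `L_A` and `L_B`
via the coordinate projections. -/
def admissible (LA : Seminorm ℝ A.carrier) (LB : Seminorm ℝ B.carrier) :
    Set (Seminorm ℝ (A.prod B).carrier) :=
  {L | (A.prod B).IsLipNorm L ∧
    Induces (Prod.fst : A.carrier × B.carrier → A.carrier) (fun p => L p) (fun a => LA a) ∧
    Induces (Prod.snd : A.carrier × B.carrier → B.carrier) (fun p => L p) (fun b => LB b)}

/-- Quantum Gromov–Hausdorff distance. -/
noncomputable def distq (LA : Seminorm ℝ A.carrier) (LB : Seminorm ℝ B.carrier) : ℝ≥0∞ :=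
  ⨅ L ∈ A.admissible B LA LB,
    hausdorffDistWith ((A.prod B).rho L) (Set.range (A.leftState B)) (Set.range (A.rightState B))

end OrderUnitSpace

/-- The space of real-valued Lipschitz functions on a metric space, as a submodule
of `X → ℝ`. -/
def lipSubmodule (X : Type) [MetricSpace X] : Submodule ℝ (X → ℝ) where
  carrier := {f : X → ℝ | ∃ K : ℝ≥0, LipschitzWith K f}
  add_mem' := by
    rintro f g ⟨Kf, hf⟩ ⟨Kg, hg⟩
    exact ⟨Kf + Kg, hf.add hg⟩
  zero_mem' := ⟨0, LipschitzWith.const' (0 : ℝ)⟩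
  smul_mem' := by
    rintro c f ⟨K, hf⟩
    exact ⟨‖c‖₊ * K, (lipschitzWith_smul c).comp hf⟩

theorem mem_lipSubmodule {X : Type} [MetricSpace X] {f : X → ℝ} :
    f ∈ lipSubmodule X ↔ ∃ K : ℝ≥0, LipschitzWith K f := Iff.rfl

/-- The order-unit space of real-valued Lipschitz functions on a nonempty compact
metric space, with pointwise order and order unit the constant function `1`. -/
@[reducible] noncomputable def lipOUS (X : Type) [MetricSpace X] [CompactSpace X] [Nonempty X] :
    OrderUnitSpace where
  carrier := lipSubmodule X
  add_le_add_left' := by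
    intro f g hfg h
    rw [← Subtype.coe_le_coe] at hfg ⊢
    intro x
    simp only [Submodule.coe_add, Pi.add_apply]
    exact add_le_add le_rfl (hfg x)
  smul_nonneg' := by
    intro r f hr hf
    rw [← Subtype.coe_le_coe] at hf ⊢
    intro x
    simp only [Submodule.coe_smul, Pi.smul_apply, smul_eq_mul, ZeroMemClass.coe_zero,
      Pi.zero_apply] at hf ⊢
    exact mul_nonneg hr (hf x)
  e := ⟨fun _ => (1 : ℝ), ⟨0, LipschitzWith.const' (1 : ℝ)⟩⟩
  e_nonneg := by
    rw [← Subtype.coe_le_coe]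
    intro x
    simp
  orderUnit := by
    intro f
    obtain ⟨K, hK⟩ := mem_lipSubmodule.mp f.2
    obtain ⟨x₀, -, hx₀⟩ := isCompact_univ.exists_isMaxOn Set.univ_nonempty
      hK.continuous.continuousOn
    refine ⟨f.1 x₀, ?_⟩
    rw [← Subtype.coe_le_coe]
    intro x
    simp only [Submodule.coe_smul, Pi.smul_apply, smul_eq_mul, mul_one]
    exact isMaxOn_iff.mp hx₀ x (Set.mem_univ x)
  arch := by
    intro f h
    rw [← Subtype.coe_le_coe]
    intro x
    simp only [ZeroMemClass.coe_zero, Pi.zero_apply]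
    refine le_of_forall_pos_le_add ?_
    intro r hr
    have := h r hr
    rw [← Subtype.coe_le_coe] at this
    have hx := this x
    simp only [Submodule.coe_smul, Pi.smul_apply, smul_eq_mul, mul_one] at hx
    linarith

/-- The Lipschitz constant of a real-valued function on a metric space:
`sup {|f x − f y| / d(x,y) : x ≠ y}`. -/
noncomputable def lipConst (X : Type) [MetricSpace X] (f : X → ℝ) : ℝ :=
  sSup ((fun p : X × X => |f p.1 - f p.2| / dist p.1 p.2) '' {p : X × X | p.1 ≠ p.2})

section Auxiliary

namespace OrderUnitSpace

variable {A : OrderUnitSpace}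

theorem sub_nonneg_of_le'' {a b : A.carrier} (h : a ≤ b) : 0 ≤ b - a := by
  have h2 := A.add_le_add_left' a b h (-a)
  rw [neg_add_cancel, ← sub_eq_neg_add] at h2
  exact h2

theorem IsState.mono {μ : A.carrier →ₗ[ℝ] ℝ} (hμ : A.IsState μ) {a b : A.carrier}
    (h : a ≤ b) : μ a ≤ μ b := by
  have h2 := hμ.2 _ (sub_nonneg_of_le'' h)
  rw [map_sub] at h2
  linarith

theorem IsState.map_smul_e {μ : A.carrier →ₗ[ℝ] ℝ} (hμ : A.IsState μ) (r : ℝ) :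
    μ (r • A.e) = r := by
  rw [map_smul, hμ.1, smul_eq_mul, mul_one]

theorem le_rho {L : Seminorm ℝ A.carrier} (μ ν : A.State) {a : A.carrier} (ha : L a ≤ 1) :
    ENNReal.ofReal |μ.1 a - ν.1 a| ≤ A.rho L μ ν :=
  le_iSup (fun b : {b : A.carrier // L b ≤ 1} => ENNReal.ofReal |μ.1 b.1 - ν.1 b.1|) ⟨a, ha⟩

theorem le_rho_smul {L : Seminorm ℝ A.carrier} (μ ν : A.State) {a : A.carrier} {r : ℝ}
    (hr : 0 < r) (ha : L a ≤ r) :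
    ENNReal.ofReal |μ.1 a - ν.1 a| ≤ ENNReal.ofReal r * A.rho L μ ν := by
  have h1 : L (r⁻¹ • a) ≤ 1 := by
    rw [map_smul_eq_mul, Real.norm_eq_abs, abs_of_pos (inv_pos.2 hr),
      inv_mul_le_iff₀ hr, mul_one]
    exact ha
  have h2 := le_rho μ ν h1
  have e1 : |μ.1 (r⁻¹ • a) - ν.1 (r⁻¹ • a)| = r⁻¹ * |μ.1 a - ν.1 a| := by
    rw [map_smul, map_smul, smul_eq_mul, smul_eq_mul, ← mul_sub, abs_mul,
      abs_of_pos (inv_pos.2 hr)]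
  calc ENNReal.ofReal |μ.1 a - ν.1 a|
      = ENNReal.ofReal (r * (r⁻¹ * |μ.1 a - ν.1 a|)) := by
        rw [← mul_assoc, mul_inv_cancel₀ hr.ne', one_mul]
    _ = ENNReal.ofReal r * ENNReal.ofReal (r⁻¹ * |μ.1 a - ν.1 a|) :=
        ENNReal.ofReal_mul hr.le
    _ ≤ ENNReal.ofReal r * A.rho L μ ν := by
        rw [← e1]
        exact mul_le_mul_right h2 _

theorem rho_comm (L : Seminorm ℝ A.carrier) (μ ν : A.State) :
    A.rho L μ ν = A.rho L ν μ := by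
  unfold OrderUnitSpace.rho
  congr 1
  funext a
  rw [abs_sub_comm]

theorem rho_self (L : Seminorm ℝ A.carrier) (μ : A.State) : A.rho L μ μ = 0 := by
  refine le_antisymm (iSup_le fun a => ?_) zero_le
  simp

theorem rho_triangle (L : Seminorm ℝ A.carrier) (μ ν κ : A.State) :
    A.rho L μ κ ≤ A.rho L μ ν + A.rho L ν κ := by
  refine iSup_le fun a => ?_
  calc ENNReal.ofReal |μ.1 a.1 - κ.1 a.1|
      ≤ ENNReal.ofReal (|μ.1 a.1 - ν.1 a.1| + |ν.1 a.1 - κ.1 a.1|) :=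
        ENNReal.ofReal_le_ofReal (by have := abs_sub_le (μ.1 a.1) (ν.1 a.1) (κ.1 a.1); linarith)
    _ ≤ A.rho L μ ν + A.rho L ν κ := by
        rw [ENNReal.ofReal_add (abs_nonneg _) (abs_nonneg _)]
        exact add_le_add (le_rho μ ν a.2) (le_rho ν κ a.2)

end OrderUnitSpace

end Auxiliary
section LipAux

variable {X : Type} [MetricSpace X] [CompactSpace X] [Nonempty X]

theorem lip_le_iff {f g : (lipOUS X).carrier} : f ≤ g ↔ ∀ x, f.1 x ≤ g.1 x := by
  rw [← Subtype.coe_le_coe]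
  exact Pi.le_def

/-- The Dirac state at a point. -/
noncomputable def diracState (x : X) : (lipOUS X).State :=
  ⟨{ toFun := fun f => f.1 x
     map_add' := fun f g => rfl
     map_smul' := fun r f => rfl },
   by
     constructor
     · rfl
     · intro f hf
       exact lip_le_iff.mp hf x⟩

/-- The distance function to a point, as an element of `Lip(X)`. -/
noncomputable def distFun (x : X) : (lipOUS X).carrier :=
  ⟨fun z => dist z x, 1, LipschitzWith.dist_left x⟩

theorem distFun_nonneg (x : X) : (0 : (lipOUS X).carrier) ≤ distFun x :=
  lip_le_iff.mpr fun z => by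
    show (0 : X → ℝ) z ≤ dist z x
    simpa using dist_nonneg

theorem lipConst_bddAbove {f : X → ℝ} {K : ℝ≥0} (hf : LipschitzWith K f) :
    BddAbove ((fun p : X × X => |f p.1 - f p.2| / dist p.1 p.2) '' {p : X × X | p.1 ≠ p.2}) := by
  refine ⟨K, ?_⟩
  rintro r ⟨p, hp, rfl⟩
  rw [div_le_iff₀ (dist_pos.2 hp)]
  have h2 := hf.dist_le_mul p.1 p.2
  rwa [Real.dist_eq] at h2

theorem abs_sub_le_of_lipConst {f : (lipOUS X).carrier} {c : ℝ} (h : lipConst X f.1 ≤ c)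
    (z z' : X) : |f.1 z - f.1 z'| ≤ c * dist z z' := by
  rcases eq_or_ne z z' with rfl | hne
  · simp
  · obtain ⟨K, hK⟩ := f.2
    have hd : (0:ℝ) < dist z z' := dist_pos.2 hne
    have hmem : |f.1 z - f.1 z'| / dist z z' ≤ lipConst X f.1 :=
      le_csSup (lipConst_bddAbove hK) ⟨(z, z'), hne, rfl⟩
    calc |f.1 z - f.1 z'| = (|f.1 z - f.1 z'| / dist z z') * dist z z' :=
          (div_mul_cancel₀ _ hd.ne').symm
      _ ≤ c * dist z z' := mul_le_mul_of_nonneg_right (hmem.trans h) hd.le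

theorem lipConst_le {f : X → ℝ} {c : ℝ} (hc : 0 ≤ c)
    (h : ∀ z z', |f z - f z'| ≤ c * dist z z') : lipConst X f ≤ c := by
  refine Real.sSup_le ?_ hc
  rintro r ⟨p, hp, rfl⟩
  rw [div_le_iff₀ (dist_pos.2 hp)]
  exact h p.1 p.2

theorem lipConst_distFun (x : X) : lipConst X ((distFun x).1 : X → ℝ) ≤ 1 :=
  lipConst_le zero_le_one fun z z' => by
    rw [one_mul]
    exact abs_dist_sub_le z z' x

theorem rho_dirac_le {LX : Seminorm ℝ (lipOUS X).carrier}
    (hLX : ∀ f : (lipOUS X).carrier, LX f = lipConst X f.1)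
    (μ : (lipOUS X).State) (x : X) :
    (lipOUS X).rho LX μ (diracState x) ≤ ENNReal.ofReal (μ.1 (distFun x)) := by
  refine iSup_le ?_
  rintro ⟨f, hf⟩
  have hL : lipConst X f.1 ≤ 1 := by rw [← hLX f]; exact hf
  have pt : ∀ z, |f.1 z - f.1 x| ≤ dist z x := fun z => by
    simpa using abs_sub_le_of_lipConst hL z x
  have key : ∀ g : (lipOUS X).carrier, g ≤ distFun x → μ.1 g ≤ μ.1 (distFun x) :=
    fun g hg => μ.2.mono hg
  have h1 : μ.1 f - f.1 x ≤ μ.1 (distFun x) := by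
    have hle : f - f.1 x • (lipOUS X).e ≤ distFun x := lip_le_iff.mpr fun z => by
      show f.1 z - f.1 x * 1 ≤ dist z x
      rw [mul_one]
      linarith [(abs_le.1 (pt z)).2]
    have h2 := key _ hle
    rwa [map_sub, μ.2.map_smul_e] at h2
  have h2 : f.1 x - μ.1 f ≤ μ.1 (distFun x) := by
    have hle : f.1 x • (lipOUS X).e - f ≤ distFun x := lip_le_iff.mpr fun z => by
      show f.1 x * 1 - f.1 z ≤ dist z x
      rw [mul_one]
      linarith [(abs_le.1 (pt z)).1]
    have h3 := key _ hle
    rwa [map_sub, μ.2.map_smul_e] at h3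
  have : |μ.1 f - (diracState x).1 f| ≤ μ.1 (distFun x) := by
    show |μ.1 f - f.1 x| ≤ _
    rw [abs_sub_le_iff]
    exact ⟨h1, h2⟩
  exact ENNReal.ofReal_le_ofReal this

theorem dirac_distFun (x z : X) : (diracState z).1 (distFun x) = dist z x := rfl

end LipAux
set_option linter.unusedSectionVars false

section BridgeAux

namespace OrderUnitSpace

variable {A B : OrderUnitSpace} {L : Seminorm ℝ (A.prod B).carrier}
variable {LA : Seminorm ℝ A.carrier} {LB : Seminorm ℝ B.carrier}

theorem LA_le_L
    (hI : Induces (Prod.fst : A.carrier × B.carrier → A.carrier) (fun p => L p) (fun a => LA a))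
    (f : A.carrier) (g : B.carrier) : LA f ≤ L (f, g) := by
  have h := hI f
  simp only at h
  rw [h, quotientSeminorm]
  refine csInf_le ⟨0, ?_⟩ ⟨(f, g), rfl, rfl⟩
  rintro r ⟨a, -, rfl⟩
  exact apply_nonneg L a

theorem LB_le_L
    (hI : Induces (Prod.snd : A.carrier × B.carrier → B.carrier) (fun p => L p) (fun b => LB b))
    (f : A.carrier) (g : B.carrier) : LB g ≤ L (f, g) := by
  have h := hI g
  simp only at h
  rw [h, quotientSeminorm]
  refine csInf_le ⟨0, ?_⟩ ⟨(f, g), rfl, rfl⟩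
  rintro r ⟨a, -, rfl⟩
  exact apply_nonneg L a

theorem exists_partner_right
    (hI : Induces (Prod.fst : A.carrier × B.carrier → A.carrier) (fun p => L p) (fun a => LA a))
    {f : A.carrier} {t : ℝ} (hf : LA f < t) : ∃ g : B.carrier, L (f, g) < t := by
  have h := hI f
  simp only at h
  rw [h, quotientSeminorm] at hf
  have hne : {r : ℝ | ∃ a : A.carrier × B.carrier, Prod.fst a = f ∧ L a = r}.Nonempty :=
    ⟨L (f, (0 : B.carrier)), ⟨(f, 0), rfl, rfl⟩⟩
  obtain ⟨r, ⟨a, ha1, ha2⟩, hrt⟩ := exists_lt_of_csInf_lt hne hf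
  obtain ⟨a1, a2⟩ := a
  refine ⟨a2, ?_⟩
  obtain rfl : a1 = f := ha1
  rw [ha2]
  exact hrt

theorem exists_partner_left
    (hI : Induces (Prod.snd : A.carrier × B.carrier → B.carrier) (fun p => L p) (fun b => LB b))
    {g : B.carrier} {t : ℝ} (hg : LB g < t) : ∃ f : A.carrier, L (f, g) < t := by
  have h := hI g
  simp only at h
  rw [h, quotientSeminorm] at hg
  have hne : {r : ℝ | ∃ a : A.carrier × B.carrier, Prod.snd a = g ∧ L a = r}.Nonempty :=
    ⟨L ((0 : A.carrier), g), ⟨(0, g), rfl, rfl⟩⟩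
  obtain ⟨r, ⟨a, ha1, ha2⟩, hrt⟩ := exists_lt_of_csInf_lt hne hg
  obtain ⟨a1, a2⟩ := a
  refine ⟨a1, ?_⟩
  obtain rfl : a2 = g := ha1
  rw [ha2]
  exact hrt

theorem leftState_apply (μ : A.State) (p : (A.prod B).carrier) :
    ((A.leftState B) μ).1 p = μ.1 p.1 := rfl

theorem rightState_apply (ν : B.State) (p : (A.prod B).carrier) :
    ((A.rightState B) ν).1 p = ν.1 p.2 := rfl

theorem rho_left_le
    (hI : Induces (Prod.fst : A.carrier × B.carrier → A.carrier) (fun p => L p) (fun a => LA a))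
    (μ ν : A.State) :
    (A.prod B).rho L (A.leftState B μ) (A.leftState B ν) ≤ A.rho LA μ ν := by
  refine iSup_le ?_
  rintro ⟨⟨f, g⟩, hfg⟩
  exact le_rho μ ν ((LA_le_L hI f g).trans hfg)

theorem rho_right_le
    (hI : Induces (Prod.snd : A.carrier × B.carrier → B.carrier) (fun p => L p) (fun b => LB b))
    (μ ν : B.State) :
    (A.prod B).rho L (A.rightState B μ) (A.rightState B ν) ≤ B.rho LB μ ν := by
  refine iSup_le ?_
  rintro ⟨⟨f, g⟩, hfg⟩
  exact le_rho μ ν ((LB_le_L hI f g).trans hfg)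

end OrderUnitSpace

end BridgeAux
section MainAux

open OrderUnitSpace

theorem le_of_forall_one_add_mul {a b : ℝ} (hb : 0 ≤ b)
    (h : ∀ θ : ℝ, 0 < θ → a ≤ (1 + θ) * b) : a ≤ b := by
  refine le_of_forall_pos_le_add fun ε hε => ?_
  have h1 := h (ε / (b + 1)) (by positivity)
  have h2 : (ε / (b + 1)) * b ≤ ε := by
    rw [div_mul_eq_mul_div, div_le_iff₀ (by linarith)]
    nlinarith
  nlinarith

variable {X Y : Type} [MetricSpace X] [CompactSpace X] [Nonempty X]
  [MetricSpace Y] [CompactSpace Y] [Nonempty Y]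
variable {LX : Seminorm ℝ (lipOUS X).carrier} {LY : Seminorm ℝ (lipOUS Y).carrier}
variable {L : Seminorm ℝ ((lipOUS X).prod (lipOUS Y)).carrier}

theorem exists_near_right {c : ℝ≥0∞}
    (hH : hausdorffDistWith (((lipOUS X).prod (lipOUS Y)).rho L)
      (Set.range ((lipOUS X).leftState (lipOUS Y)))
      (Set.range ((lipOUS X).rightState (lipOUS Y))) < c)
    (μ : (lipOUS X).State) :
    ∃ ν : (lipOUS Y).State,
      ((lipOUS X).prod (lipOUS Y)).rho L ((lipOUS X).leftState (lipOUS Y) μ)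
        ((lipOUS X).rightState (lipOUS Y) ν) < c := by
  have h1 := (max_lt_iff.mp hH).1
  have h2 : (⨅ u ∈ Set.range ((lipOUS X).rightState (lipOUS Y)),
      ((lipOUS X).prod (lipOUS Y)).rho L ((lipOUS X).leftState (lipOUS Y) μ) u) < c :=
    lt_of_le_of_lt (le_iSup₂ (f := fun t (_ : t ∈ Set.range ((lipOUS X).leftState (lipOUS Y))) =>
      ⨅ u ∈ Set.range ((lipOUS X).rightState (lipOUS Y)), ((lipOUS X).prod (lipOUS Y)).rho L t u)
      ((lipOUS X).leftState (lipOUS Y) μ) (Set.mem_range_self μ)) h1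
  by_contra hc
  push_neg at hc
  have h3 : c ≤ ⨅ u ∈ Set.range ((lipOUS X).rightState (lipOUS Y)),
      ((lipOUS X).prod (lipOUS Y)).rho L ((lipOUS X).leftState (lipOUS Y) μ) u :=
    le_iInf₂ fun u hu => by
      obtain ⟨ν, rfl⟩ := hu
      exact hc ν
  exact absurd h2 (not_lt.2 h3)

theorem exists_near_left {c : ℝ≥0∞}
    (hH : hausdorffDistWith (((lipOUS X).prod (lipOUS Y)).rho L)
      (Set.range ((lipOUS X).leftState (lipOUS Y)))
      (Set.range ((lipOUS X).rightState (lipOUS Y))) < c)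
    (ν : (lipOUS Y).State) :
    ∃ μ : (lipOUS X).State,
      ((lipOUS X).prod (lipOUS Y)).rho L ((lipOUS X).leftState (lipOUS Y) μ)
        ((lipOUS X).rightState (lipOUS Y) ν) < c := by
  have h1 := (max_lt_iff.mp hH).2
  have h2 : (⨅ t ∈ Set.range ((lipOUS X).leftState (lipOUS Y)),
      ((lipOUS X).prod (lipOUS Y)).rho L t ((lipOUS X).rightState (lipOUS Y) ν)) < c :=
    lt_of_le_of_lt (le_iSup₂ (f := fun u (_ : u ∈ Set.range ((lipOUS X).rightState (lipOUS Y))) =>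
      ⨅ t ∈ Set.range ((lipOUS X).leftState (lipOUS Y)), ((lipOUS X).prod (lipOUS Y)).rho L t u)
      ((lipOUS X).rightState (lipOUS Y) ν) (Set.mem_range_self ν)) h1
  by_contra hc
  push_neg at hc
  have h3 : c ≤ ⨅ t ∈ Set.range ((lipOUS X).leftState (lipOUS Y)),
      ((lipOUS X).prod (lipOUS Y)).rho L t ((lipOUS X).rightState (lipOUS Y) ν) :=
    le_iInf₂ fun t ht => by
      obtain ⟨μ, rfl⟩ := ht
      exact hc μ
  exact absurd h2 (not_lt.2 h3)

end MainAux
section MainAux2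

open OrderUnitSpace

variable {X Y : Type} [MetricSpace X] [CompactSpace X] [Nonempty X]
  [MetricSpace Y] [CompactSpace Y] [Nonempty Y]
variable {LX : Seminorm ℝ (lipOUS X).carrier} {LY : Seminorm ℝ (lipOUS Y).carrier}
variable {L : Seminorm ℝ ((lipOUS X).prod (lipOUS Y)).carrier}

theorem main_exists_right
    (hLX : ∀ f : (lipOUS X).carrier, LX f = lipConst X f.1)
    (hIX : Induces (Prod.fst : (lipOUS X).carrier × (lipOUS Y).carrier → (lipOUS X).carrier)
      (fun p => L p) (fun a => LX a))
    {ε : ℝ} (hε : 0 < ε)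
    (hH : hausdorffDistWith (((lipOUS X).prod (lipOUS Y)).rho L)
      (Set.range ((lipOUS X).leftState (lipOUS Y)))
      (Set.range ((lipOUS X).rightState (lipOUS Y))) < ENNReal.ofReal ε)
    (x : X) :
    ∃ y : Y, ((lipOUS X).prod (lipOUS Y)).rho L
        ((lipOUS X).leftState (lipOUS Y) (diracState x))
        ((lipOUS X).rightState (lipOUS Y) (diracState y)) ≤ ENNReal.ofReal (6 * ε) := by
  obtain ⟨ν, hν⟩ := exists_near_right hH (diracState x)
  have hf1 : LX (distFun x) < 2 := by
    rw [hLX]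
    exact lt_of_le_of_lt (lipConst_distFun x) one_lt_two
  obtain ⟨b, hb⟩ := exists_partner_right hIX hf1
  choose κ hκ using fun y : Y => exists_near_left hH (diracState y)
  -- (*) : |ν b| ≤ 2ε
  have hstar : |ν.1 b| ≤ 2 * ε := by
    have h := le_rho_smul (A := (lipOUS X).prod (lipOUS Y))
      ((lipOUS X).leftState (lipOUS Y) (diracState x))
      ((lipOUS X).rightState (lipOUS Y) ν) (a := (distFun x, b)) two_pos hb.le
    rw [leftState_apply, rightState_apply] at h
    have hv : (diracState x).1 ((distFun x, b) : (lipOUS X).carrier × (lipOUS Y).carrier).1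
        = 0 := by
      show dist x x = 0
      exact dist_self x
    rw [hv, zero_sub, abs_neg] at h
    have h2 : ENNReal.ofReal |ν.1 b| ≤ ENNReal.ofReal (2 * ε) := by
      refine h.trans ?_
      rw [ENNReal.ofReal_mul (by norm_num : (0:ℝ) ≤ 2)]
      exact mul_le_mul_right hν.le _
    exact (ENNReal.ofReal_le_ofReal_iff (by positivity)).mp h2
  -- (**) : ∀ y, |κ y (distFun x) - b y| ≤ 2ε
  have hstar2 : ∀ y : Y, |(κ y).1 (distFun x) - b.1 y| ≤ 2 * ε := by
    intro y
    have h := le_rho_smul (A := (lipOUS X).prod (lipOUS Y))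
      ((lipOUS X).leftState (lipOUS Y) (κ y))
      ((lipOUS X).rightState (lipOUS Y) (diracState y)) (a := (distFun x, b)) two_pos hb.le
    rw [leftState_apply, rightState_apply] at h
    have h2 : ENNReal.ofReal |(κ y).1 (distFun x) - b.1 y| ≤ ENNReal.ofReal (2 * ε) := by
      refine h.trans ?_
      rw [ENNReal.ofReal_mul (by norm_num : (0:ℝ) ≤ 2)]
      exact mul_le_mul_right (hκ y).le _
    exact (ENNReal.ofReal_le_ofReal_iff (by positivity)).mp h2
  -- chain
  have hκpos : ∀ y : Y, 0 ≤ (κ y).1 (distFun x) := fun y =>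
    (κ y).2.2 (distFun x) (distFun_nonneg x)
  have hchain : ∀ y : Y, ((lipOUS X).prod (lipOUS Y)).rho L
      ((lipOUS X).leftState (lipOUS Y) (diracState x))
      ((lipOUS X).rightState (lipOUS Y) (diracState y))
      ≤ ENNReal.ofReal ((κ y).1 (distFun x) + ε) := by
    intro y
    have t1 := rho_triangle L ((lipOUS X).leftState (lipOUS Y) (diracState x))
      ((lipOUS X).leftState (lipOUS Y) (κ y))
      ((lipOUS X).rightState (lipOUS Y) (diracState y))
    have t2 : ((lipOUS X).prod (lipOUS Y)).rho L
        ((lipOUS X).leftState (lipOUS Y) (diracState x))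
        ((lipOUS X).leftState (lipOUS Y) (κ y))
        ≤ ENNReal.ofReal ((κ y).1 (distFun x)) := by
      refine (rho_left_le hIX _ _).trans ?_
      rw [rho_comm]
      exact rho_dirac_le hLX (κ y) x
    calc ((lipOUS X).prod (lipOUS Y)).rho L _ _
        ≤ _ := t1
      _ ≤ ENNReal.ofReal ((κ y).1 (distFun x)) + ENNReal.ofReal ε :=
          add_le_add t2 (hκ y).le
      _ = ENNReal.ofReal ((κ y).1 (distFun x) + ε) :=
          (ENNReal.ofReal_add (hκpos y) hε.le).symm
  -- conclude by contradiction
  by_contra hcon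
  push_neg at hcon
  have hb3 : ∀ y : Y, 3 * ε < b.1 y := by
    intro y
    have h1 := lt_of_lt_of_le (hcon y) (hchain y)
    have h2 : 6 * ε < (κ y).1 (distFun x) + ε :=
      (ENNReal.ofReal_lt_ofReal_iff (by nlinarith [hκpos y])).mp h1
    have h3 := (abs_le.1 (hstar2 y)).2
    linarith
  have hb4 : (3 * ε) • (lipOUS Y).e ≤ b := lip_le_iff.mpr fun y => by
    show 3 * ε * 1 ≤ b.1 y
    rw [mul_one]
    exact (hb3 y).le
  have h5 : 3 * ε ≤ ν.1 b := by
    have h6 := ν.2.mono hb4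
    rwa [ν.2.map_smul_e] at h6
  have h7 := (abs_le.1 hstar).2
  linarith

end MainAux2
section MainAux3

open OrderUnitSpace

variable {X Y : Type} [MetricSpace X] [CompactSpace X] [Nonempty X]
  [MetricSpace Y] [CompactSpace Y] [Nonempty Y]
variable {LX : Seminorm ℝ (lipOUS X).carrier} {LY : Seminorm ℝ (lipOUS Y).carrier}
variable {L : Seminorm ℝ ((lipOUS X).prod (lipOUS Y)).carrier}

theorem main_exists_left
    (hLY : ∀ g : (lipOUS Y).carrier, LY g = lipConst Y g.1)
    (hIY : Induces (Prod.snd : (lipOUS X).carrier × (lipOUS Y).carrier → (lipOUS Y).carrier)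
      (fun p => L p) (fun b => LY b))
    {ε : ℝ} (hε : 0 < ε)
    (hH : hausdorffDistWith (((lipOUS X).prod (lipOUS Y)).rho L)
      (Set.range ((lipOUS X).leftState (lipOUS Y)))
      (Set.range ((lipOUS X).rightState (lipOUS Y))) < ENNReal.ofReal ε)
    (y : Y) :
    ∃ x : X, ((lipOUS X).prod (lipOUS Y)).rho L
        ((lipOUS X).leftState (lipOUS Y) (diracState x))
        ((lipOUS X).rightState (lipOUS Y) (diracState y)) ≤ ENNReal.ofReal (6 * ε) := by
  obtain ⟨κ, hκ⟩ := exists_near_left hH (diracState y)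
  have hf1 : LY (distFun y) < 2 := by
    rw [hLY]
    exact lt_of_le_of_lt (lipConst_distFun y) one_lt_two
  obtain ⟨a, ha⟩ := exists_partner_left hIY hf1
  choose ν hν using fun x : X => exists_near_right hH (diracState x)
  -- (*) : |κ a| ≤ 2ε
  have hstar : |κ.1 a| ≤ 2 * ε := by
    have h := le_rho_smul (A := (lipOUS X).prod (lipOUS Y))
      ((lipOUS X).leftState (lipOUS Y) κ)
      ((lipOUS X).rightState (lipOUS Y) (diracState y)) (a := (a, distFun y)) two_pos ha.le
    rw [leftState_apply, rightState_apply] at h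
    have hv : (diracState y).1 ((a, distFun y) : (lipOUS X).carrier × (lipOUS Y).carrier).2
        = 0 := by
      show dist y y = 0
      exact dist_self y
    rw [hv, sub_zero] at h
    have h2 : ENNReal.ofReal |κ.1 a| ≤ ENNReal.ofReal (2 * ε) := by
      refine h.trans ?_
      rw [ENNReal.ofReal_mul (by norm_num : (0:ℝ) ≤ 2)]
      exact mul_le_mul_right hκ.le _
    exact (ENNReal.ofReal_le_ofReal_iff (by positivity)).mp h2
  -- (**) : ∀ x, |a x - ν x (distFun y)| ≤ 2ε
  have hstar2 : ∀ x : X, |a.1 x - (ν x).1 (distFun y)| ≤ 2 * ε := by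
    intro x
    have h := le_rho_smul (A := (lipOUS X).prod (lipOUS Y))
      ((lipOUS X).leftState (lipOUS Y) (diracState x))
      ((lipOUS X).rightState (lipOUS Y) (ν x)) (a := (a, distFun y)) two_pos ha.le
    rw [leftState_apply, rightState_apply] at h
    have h2 : ENNReal.ofReal |a.1 x - (ν x).1 (distFun y)| ≤ ENNReal.ofReal (2 * ε) := by
      refine h.trans ?_
      rw [ENNReal.ofReal_mul (by norm_num : (0:ℝ) ≤ 2)]
      exact mul_le_mul_right (hν x).le _
    exact (ENNReal.ofReal_le_ofReal_iff (by positivity)).mp h2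
  have hνpos : ∀ x : X, 0 ≤ (ν x).1 (distFun y) := fun x =>
    (ν x).2.2 (distFun y) (distFun_nonneg y)
  -- chain
  have hchain : ∀ x : X, ((lipOUS X).prod (lipOUS Y)).rho L
      ((lipOUS X).leftState (lipOUS Y) (diracState x))
      ((lipOUS X).rightState (lipOUS Y) (diracState y))
      ≤ ENNReal.ofReal ((ν x).1 (distFun y) + ε) := by
    intro x
    have t1 := rho_triangle L ((lipOUS X).leftState (lipOUS Y) (diracState x))
      ((lipOUS X).rightState (lipOUS Y) (ν x))
      ((lipOUS X).rightState (lipOUS Y) (diracState y))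
    have t2 : ((lipOUS X).prod (lipOUS Y)).rho L
        ((lipOUS X).rightState (lipOUS Y) (ν x))
        ((lipOUS X).rightState (lipOUS Y) (diracState y))
        ≤ ENNReal.ofReal ((ν x).1 (distFun y)) :=
      (rho_right_le hIY _ _).trans (rho_dirac_le hLY (ν x) y)
    calc ((lipOUS X).prod (lipOUS Y)).rho L _ _
        ≤ _ := t1
      _ ≤ ENNReal.ofReal ε + ENNReal.ofReal ((ν x).1 (distFun y)) :=
          add_le_add (hν x).le t2
      _ = ENNReal.ofReal ((ν x).1 (distFun y) + ε) := by
          rw [← ENNReal.ofReal_add hε.le (hνpos x), add_comm]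
  -- conclude by contradiction
  by_contra hcon
  push_neg at hcon
  have hb3 : ∀ x : X, 3 * ε < a.1 x := by
    intro x
    have h1 := lt_of_lt_of_le (hcon x) (hchain x)
    have h2 : 6 * ε < (ν x).1 (distFun y) + ε :=
      (ENNReal.ofReal_lt_ofReal_iff (by nlinarith [hνpos x])).mp h1
    have h3 := (abs_le.1 (hstar2 x)).1
    linarith
  have hb4 : (3 * ε) • (lipOUS X).e ≤ a := lip_le_iff.mpr fun x => by
    show 3 * ε * 1 ≤ a.1 x
    rw [mul_one]
    exact (hb3 x).le
  have h5 : 3 * ε ≤ κ.1 a := by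
    have h6 := κ.2.mono hb4
    rwa [κ.2.map_smul_e] at h6
  have h7 := (abs_le.1 hstar).2
  linarith

end MainAux3
section GlueAux

open OrderUnitSpace

variable {X Y : Type} [MetricSpace X] [CompactSpace X] [Nonempty X]
  [MetricSpace Y] [CompactSpace Y] [Nonempty Y]
variable {LX : Seminorm ℝ (lipOUS X).carrier} {LY : Seminorm ℝ (lipOUS Y).carrier}
variable {L : Seminorm ℝ ((lipOUS X).prod (lipOUS Y)).carrier}

theorem rho_left_dirac_le
    (hLX : ∀ f : (lipOUS X).carrier, LX f = lipConst X f.1)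
    (hIX : Induces (Prod.fst : (lipOUS X).carrier × (lipOUS Y).carrier → (lipOUS X).carrier)
      (fun p => L p) (fun a => LX a)) (x x' : X) :
    ((lipOUS X).prod (lipOUS Y)).rho L ((lipOUS X).leftState (lipOUS Y) (diracState x))
      ((lipOUS X).leftState (lipOUS Y) (diracState x')) ≤ ENNReal.ofReal (dist x x') := by
  refine (rho_left_le hIX _ _).trans ?_
  have h := rho_dirac_le hLX (diracState x) x'
  rwa [show (diracState x).1 (distFun x') = dist x x' from rfl] at h

theorem rho_right_dirac_le
    (hLY : ∀ g : (lipOUS Y).carrier, LY g = lipConst Y g.1)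
    (hIY : Induces (Prod.snd : (lipOUS X).carrier × (lipOUS Y).carrier → (lipOUS Y).carrier)
      (fun p => L p) (fun b => LY b)) (y y' : Y) :
    ((lipOUS X).prod (lipOUS Y)).rho L ((lipOUS X).rightState (lipOUS Y) (diracState y))
      ((lipOUS X).rightState (lipOUS Y) (diracState y')) ≤ ENNReal.ofReal (dist y y') := by
  refine (rho_right_le hIY _ _).trans ?_
  have h := rho_dirac_le hLY (diracState y) y'
  rwa [show (diracState y).1 (distFun y') = dist y y' from rfl] at h

theorem dist_le_toReal_rho_left
    (hLX : ∀ f : (lipOUS X).carrier, LX f = lipConst X f.1)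
    (hIX : Induces (Prod.fst : (lipOUS X).carrier × (lipOUS Y).carrier → (lipOUS X).carrier)
      (fun p => L p) (fun a => LX a)) (x x' : X) :
    dist x x' ≤ (((lipOUS X).prod (lipOUS Y)).rho L
      ((lipOUS X).leftState (lipOUS Y) (diracState x))
      ((lipOUS X).leftState (lipOUS Y) (diracState x'))).toReal := by
  have hub := rho_left_dirac_le hLX hIX (Y := Y) (L := L) x x'
  have hne : ((lipOUS X).prod (lipOUS Y)).rho L
      ((lipOUS X).leftState (lipOUS Y) (diracState x))
      ((lipOUS X).leftState (lipOUS Y) (diracState x')) ≠ ⊤ :=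
    ne_top_of_le_ne_top ENNReal.ofReal_ne_top hub
  refine le_of_forall_one_add_mul ENNReal.toReal_nonneg fun θ hθ => ?_
  have hf1 : LX (distFun x') < 1 + θ := by
    rw [hLX]
    linarith [lipConst_distFun x']
  obtain ⟨g, hg⟩ := exists_partner_right hIX hf1
  have h := le_rho_smul (A := (lipOUS X).prod (lipOUS Y))
    ((lipOUS X).leftState (lipOUS Y) (diracState x))
    ((lipOUS X).leftState (lipOUS Y) (diracState x')) (a := (distFun x', g))
    (by linarith) hg.le
  rw [leftState_apply, leftState_apply] at h
  have hv : |(diracState x).1 (distFun x') - (diracState x').1 (distFun x')| = dist x x' := by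
    show |dist x x' - dist x' x'| = dist x x'
    rw [dist_self, sub_zero, abs_of_nonneg dist_nonneg]
  rw [hv] at h
  have h2 := ENNReal.toReal_mono
    (ENNReal.mul_ne_top ENNReal.ofReal_ne_top hne) h
  rwa [ENNReal.toReal_ofReal dist_nonneg, ENNReal.toReal_mul,
    ENNReal.toReal_ofReal (by linarith)] at h2

theorem dist_le_toReal_rho_right
    (hLY : ∀ g : (lipOUS Y).carrier, LY g = lipConst Y g.1)
    (hIY : Induces (Prod.snd : (lipOUS X).carrier × (lipOUS Y).carrier → (lipOUS Y).carrier)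
      (fun p => L p) (fun b => LY b)) (y y' : Y) :
    dist y y' ≤ (((lipOUS X).prod (lipOUS Y)).rho L
      ((lipOUS X).rightState (lipOUS Y) (diracState y))
      ((lipOUS X).rightState (lipOUS Y) (diracState y'))).toReal := by
  have hub := rho_right_dirac_le hLY hIY (X := X) (L := L) y y'
  have hne : ((lipOUS X).prod (lipOUS Y)).rho L
      ((lipOUS X).rightState (lipOUS Y) (diracState y))
      ((lipOUS X).rightState (lipOUS Y) (diracState y')) ≠ ⊤ :=
    ne_top_of_le_ne_top ENNReal.ofReal_ne_top hub
  refine le_of_forall_one_add_mul ENNReal.toReal_nonneg fun θ hθ => ?_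
  have hf1 : LY (distFun y') < 1 + θ := by
    rw [hLY]
    linarith [lipConst_distFun y']
  obtain ⟨g, hg⟩ := exists_partner_left hIY hf1
  have h := le_rho_smul (A := (lipOUS X).prod (lipOUS Y))
    ((lipOUS X).rightState (lipOUS Y) (diracState y))
    ((lipOUS X).rightState (lipOUS Y) (diracState y')) (a := (g, distFun y'))
    (by linarith) hg.le
  rw [rightState_apply, rightState_apply] at h
  have hv : |(diracState y).1 (distFun y') - (diracState y').1 (distFun y')| = dist y y' := by
    show |dist y y' - dist y' y'| = dist y y'
    rw [dist_self, sub_zero, abs_of_nonneg dist_nonneg]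
  rw [hv] at h
  have h2 := ENNReal.toReal_mono
    (ENNReal.mul_ne_top ENNReal.ofReal_ne_top hne) h
  rwa [ENNReal.toReal_ofReal dist_nonneg, ENNReal.toReal_mul,
    ENNReal.toReal_ofReal (by linarith)] at h2

theorem cross_ne_top
    (hLX : ∀ f : (lipOUS X).carrier, LX f = lipConst X f.1)
    (hIX : Induces (Prod.fst : (lipOUS X).carrier × (lipOUS Y).carrier → (lipOUS X).carrier)
      (fun p => L p) (fun a => LX a))
    {ε : ℝ}
    (hH : hausdorffDistWith (((lipOUS X).prod (lipOUS Y)).rho L)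
      (Set.range ((lipOUS X).leftState (lipOUS Y)))
      (Set.range ((lipOUS X).rightState (lipOUS Y))) < ENNReal.ofReal ε)
    (x : X) (y : Y) :
    ((lipOUS X).prod (lipOUS Y)).rho L ((lipOUS X).leftState (lipOUS Y) (diracState x))
      ((lipOUS X).rightState (lipOUS Y) (diracState y)) ≠ ⊤ := by
  obtain ⟨κ, hκ⟩ := exists_near_left hH (diracState y)
  have t1 := rho_triangle L ((lipOUS X).leftState (lipOUS Y) (diracState x))
    ((lipOUS X).leftState (lipOUS Y) κ)
    ((lipOUS X).rightState (lipOUS Y) (diracState y))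
  have t2 : ((lipOUS X).prod (lipOUS Y)).rho L
      ((lipOUS X).leftState (lipOUS Y) (diracState x))
      ((lipOUS X).leftState (lipOUS Y) κ) ≤ ENNReal.ofReal (κ.1 (distFun x)) := by
    refine (rho_left_le hIX _ _).trans ?_
    rw [rho_comm]
    exact rho_dirac_le hLX κ x
  refine ne_top_of_le_ne_top ?_ (t1.trans (add_le_add t2 hκ.le))
  exact ENNReal.add_ne_top.mpr ⟨ENNReal.ofReal_ne_top, ENNReal.ofReal_ne_top⟩

theorem cross_ne_zero
    (hLip : ((lipOUS X).prod (lipOUS Y)).IsLipschitz L) (x : X) (y : Y) :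
    ((lipOUS X).prod (lipOUS Y)).rho L ((lipOUS X).leftState (lipOUS Y) (diracState x))
      ((lipOUS X).rightState (lipOUS Y) (diracState y)) ≠ 0 := by
  set p : ((lipOUS X).prod (lipOUS Y)).carrier := ((lipOUS X).e, (0 : (lipOUS Y).carrier))
    with hpdef
  have hp : L p ≠ 0 := by
    intro h0
    obtain ⟨t, ht⟩ := (hLip p).1 h0
    have h1 : (0 : (lipOUS Y).carrier) = t • (lipOUS Y).e := congrArg Prod.snd ht
    have h2 : (lipOUS X).e = t • (lipOUS X).e := congrArg Prod.fst ht
    have e1 : (0:ℝ) = t * 1 := congrArg (fun g : (lipOUS Y).carrier => g.1 (Classical.arbitrary Y)) h1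
    have e2 : (1:ℝ) = t * 1 := congrArg (fun g : (lipOUS X).carrier => g.1 (Classical.arbitrary X)) h2
    rw [mul_one] at e1 e2
    rw [← e1] at e2
    exact one_ne_zero e2
  have hppos : 0 < L p := lt_of_le_of_ne (apply_nonneg L p) (Ne.symm hp)
  intro h0
  have h := le_rho_smul (A := (lipOUS X).prod (lipOUS Y))
    ((lipOUS X).leftState (lipOUS Y) (diracState x))
    ((lipOUS X).rightState (lipOUS Y) (diracState y)) (a := p) hppos le_rfl
  rw [h0, mul_zero, leftState_apply, rightState_apply] at h
  have hv : |(diracState x).1 p.1 - (diracState y).1 p.2| = 1 := by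
    rw [hpdef]
    show |((lipOUS X).e).1 x - (diracState y).1 0| = 1
    rw [map_zero]
    show |(1:ℝ) - 0| = 1
    norm_num
  rw [hv] at h
  simp at h

end GlueAux
/-- **Corollary 7.10 of Rieffel.** Let `(X, ρ_X)` and `(Y, ρ_Y)` be nonempty compact
metric spaces, with associated compact quantum metric spaces `(Lip(X), L_{ρ_X})` and
`(Lip(Y), L_{ρ_Y})`. If the quantum Gromov–Hausdorff distance between them is `0`,
then `dist_GH(X, Y) = 0`, i.e. `X` and `Y` are isometric. -/
theorem ghDist_eq_zero_of_distq_eq_zero (X Y : Type)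
    [MetricSpace X] [CompactSpace X] [Nonempty X]
    [MetricSpace Y] [CompactSpace Y] [Nonempty Y]
    (LX : Seminorm ℝ (lipOUS X).carrier) (LY : Seminorm ℝ (lipOUS Y).carrier)
    (hLX : ∀ f : (lipOUS X).carrier, LX f = lipConst X f.1)
    (hLY : ∀ g : (lipOUS Y).carrier, LY g = lipConst Y g.1)
    (hLipX : (lipOUS X).IsLipNorm LX) (hLipY : (lipOUS Y).IsLipNorm LY)
    (h : (lipOUS X).distq (lipOUS Y) LX LY = 0) :
    GromovHausdorff.ghDist X Y = 0 ∧ Nonempty (X ≃ᵢ Y) := by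
  have key : ∀ ε : ℝ, 0 < ε → GromovHausdorff.ghDist X Y ≤ 6 * ε := by
    intro ε hε
    have h0 : (lipOUS X).distq (lipOUS Y) LX LY < ENNReal.ofReal ε := by
      rw [h]
      exact ENNReal.ofReal_pos.2 hε
    obtain ⟨L, hLadm, hH⟩ : ∃ L ∈ (lipOUS X).admissible (lipOUS Y) LX LY,
        hausdorffDistWith (((lipOUS X).prod (lipOUS Y)).rho L)
          (Set.range ((lipOUS X).leftState (lipOUS Y)))
          (Set.range ((lipOUS X).rightState (lipOUS Y))) < ENNReal.ofReal ε := by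
      by_contra hc
      push_neg at hc
      have hle : ENNReal.ofReal ε ≤ (lipOUS X).distq (lipOUS Y) LX LY :=
        le_iInf₂ fun L hL => hc L hL
      exact absurd h0 (not_lt.2 hle)
    obtain ⟨hLip, hIX, hIY⟩ := hLadm
    let j : X ⊕ Y → ((lipOUS X).prod (lipOUS Y)).State :=
      Sum.elim (fun x => (lipOUS X).leftState (lipOUS Y) (diracState x))
        (fun y => (lipOUS X).rightState (lipOUS Y) (diracState y))
    have fin : ∀ p q, ((lipOUS X).prod (lipOUS Y)).rho L (j p) (j q) ≠ ⊤ := by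
      rintro (x | y) (x' | y')
      · exact ne_top_of_le_ne_top ENNReal.ofReal_ne_top (rho_left_dirac_le hLX hIX x x')
      · exact cross_ne_top hLX hIX hH x y'
      · rw [OrderUnitSpace.rho_comm]
        exact cross_ne_top hLX hIX hH x' y
      · exact ne_top_of_le_ne_top ENNReal.ofReal_ne_top (rho_right_dirac_le hLY hIY y y')
    letI : MetricSpace (X ⊕ Y) :=
      { dist := fun p q => (((lipOUS X).prod (lipOUS Y)).rho L (j p) (j q)).toReal
        dist_self := fun p => by
          show (((lipOUS X).prod (lipOUS Y)).rho L (j p) (j p)).toReal = 0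
          rw [OrderUnitSpace.rho_self]
          exact ENNReal.toReal_zero
        dist_comm := fun p q => by
          show (((lipOUS X).prod (lipOUS Y)).rho L (j p) (j q)).toReal
            = (((lipOUS X).prod (lipOUS Y)).rho L (j q) (j p)).toReal
          rw [OrderUnitSpace.rho_comm]
        dist_triangle := fun p q r => by
          show (((lipOUS X).prod (lipOUS Y)).rho L (j p) (j r)).toReal
            ≤ (((lipOUS X).prod (lipOUS Y)).rho L (j p) (j q)).toReal
              + (((lipOUS X).prod (lipOUS Y)).rho L (j q) (j r)).toReal
          have h1 := OrderUnitSpace.rho_triangle L (j p) (j q) (j r)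
          calc (((lipOUS X).prod (lipOUS Y)).rho L (j p) (j r)).toReal
              ≤ (((lipOUS X).prod (lipOUS Y)).rho L (j p) (j q)
                  + ((lipOUS X).prod (lipOUS Y)).rho L (j q) (j r)).toReal :=
                ENNReal.toReal_mono (ENNReal.add_ne_top.mpr ⟨fin p q, fin q r⟩) h1
            _ = _ := ENNReal.toReal_add (fin p q) (fin q r)
        eq_of_dist_eq_zero := by
          rintro (x | y) (x' | y') hd
          · have hd' : (((lipOUS X).prod (lipOUS Y)).rho L (j (Sum.inl x))
                (j (Sum.inl x'))).toReal = 0 := hd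
            have hlow := dist_le_toReal_rho_left hLX hIX (Y := Y) (L := L) x x'
            have : x = x' := dist_le_zero.1 (hlow.trans_eq hd')
            rw [this]
          · have hd' : (((lipOUS X).prod (lipOUS Y)).rho L (j (Sum.inl x))
                (j (Sum.inr y'))).toReal = 0 := hd
            have h0' := ((ENNReal.toReal_eq_zero_iff _).mp hd').resolve_right
              (fin (Sum.inl x) (Sum.inr y'))
            exact absurd h0' (cross_ne_zero hLip.1 x y')
          · have hd' : (((lipOUS X).prod (lipOUS Y)).rho L (j (Sum.inr y))
                (j (Sum.inl x'))).toReal = 0 := hd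
            rw [OrderUnitSpace.rho_comm] at hd'
            have h0' := ((ENNReal.toReal_eq_zero_iff _).mp hd').resolve_right
              (by rw [OrderUnitSpace.rho_comm]; exact fin (Sum.inr y) (Sum.inl x'))
            exact absurd h0' (cross_ne_zero hLip.1 x' y)
          · have hd' : (((lipOUS X).prod (lipOUS Y)).rho L (j (Sum.inr y))
                (j (Sum.inr y'))).toReal = 0 := hd
            have hlow := dist_le_toReal_rho_right hLY hIY (X := X) (L := L) y y'
            have : y = y' := dist_le_zero.1 (hlow.trans_eq hd')
            rw [this] }
    have hIl : Isometry (Sum.inl : X → X ⊕ Y) := Isometry.of_dist_eq fun x x' => by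
      show (((lipOUS X).prod (lipOUS Y)).rho L (j (Sum.inl x)) (j (Sum.inl x'))).toReal
        = dist x x'
      refine le_antisymm ?_ (dist_le_toReal_rho_left hLX hIX x x')
      exact ENNReal.toReal_le_of_le_ofReal dist_nonneg (rho_left_dirac_le hLX hIX x x')
    have hIr : Isometry (Sum.inr : Y → X ⊕ Y) := Isometry.of_dist_eq fun y y' => by
      show (((lipOUS X).prod (lipOUS Y)).rho L (j (Sum.inr y)) (j (Sum.inr y'))).toReal
        = dist y y'
      refine le_antisymm ?_ (dist_le_toReal_rho_right hLY hIY y y')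
      exact ENNReal.toReal_le_of_le_ofReal dist_nonneg (rho_right_dirac_le hLY hIY y y')
    have hGH := GromovHausdorff.ghDist_le_hausdorffDist hIl hIr
    have hHD : Metric.hausdorffDist (Set.range (Sum.inl : X → X ⊕ Y))
        (Set.range (Sum.inr : Y → X ⊕ Y)) ≤ 6 * ε := by
      refine Metric.hausdorffDist_le_of_mem_dist (by positivity) ?_ ?_
      · rintro p ⟨x, rfl⟩
        obtain ⟨y, hy⟩ := main_exists_right hLX hIX hε hH x
        refine ⟨Sum.inr y, Set.mem_range_self y, ?_⟩
        exact ENNReal.toReal_le_of_le_ofReal (by positivity) hy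
      · rintro q ⟨y, rfl⟩
        obtain ⟨x, hx⟩ := main_exists_left hLY hIY hε hH y
        refine ⟨Sum.inl x, Set.mem_range_self x, ?_⟩
        show (((lipOUS X).prod (lipOUS Y)).rho L (j (Sum.inr y)) (j (Sum.inl x))).toReal ≤ 6 * ε
        rw [OrderUnitSpace.rho_comm]
        exact ENNReal.toReal_le_of_le_ofReal (by positivity) hx
    linarith [hGH.trans hHD]
  have h2 : 0 ≤ GromovHausdorff.ghDist X Y := dist_nonneg
  have h1 : GromovHausdorff.ghDist X Y ≤ 0 := by
    refine le_of_forall_pos_le_add fun ε hε => ?_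
    have hk := key (ε / 6) (by positivity)
    linarith
  have h3 : GromovHausdorff.ghDist X Y = 0 := le_antisymm h1 h2
  refine ⟨h3, ?_⟩
  have h4 : GromovHausdorff.toGHSpace X = GromovHausdorff.toGHSpace Y :=
    eq_of_dist_eq_zero h3
  exact GromovHausdorff.toGHSpace_eq_toGHSpace_iff_isometryEquiv.1 h4
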